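/- For every ω ∈ {0,1}^ℕ the set p_ω := Λ_ω ∩ 𝒫 is nonempty and connected, and the connected component of Λ_ω containing p_ω is unbounded. Moreover Λ_ω ∩ Λ_{ω'} = ∅ whenever ω ≠ ω'. -/

import Mathlib

noncomputable section

open Filter Topology

namespace TMH

/-- the trace map `f(x,y) = (x²(y−2)+2, x²y²(y−2)+2)` -/
def tmap (p : ℝ × ℝ) : ℝ × ℝ :=
  (p.1 ^ 2 * (p.2 - 2) + 2, p.1 ^ 2 * p.2 ^ 2 * (p.2 - 2) + 2)

/-- the strip `S = {(x,y) : |x| ≤ 1, y ≤ x² − 2}` -/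
def S : Set (ℝ × ℝ) := {p | |p.1| ≤ 1 ∧ p.2 ≤ p.1 ^ 2 - 2}

/-- the parabola `𝒫 = {(x,y) : y = x² − 2}` -/
def Par : Set (ℝ × ℝ) := {p | p.2 = p.1 ^ 2 - 2}

/-- the domain `𝒰` of the inverse branches `F_{±,+}` -/
def domU : Set (ℝ × ℝ) :=
  {p | p.1 < 2 ∧ p.2 < 2 ∧ 0 < p.2 - 4 * p.1 + 6} ∪
  {p | 2 < p.1 ∧ 2 < p.2 ∧ 0 < p.2 - 4 * p.1 + 6}

/-- the inverse branches `F_{ε,η}` of the trace map -/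
def Fb (e h : ℝ) (p : ℝ × ℝ) : ℝ × ℝ :=
  (e * Real.sqrt ((2 - p.1) / (2 - h * Real.sqrt ((2 - p.2) / (2 - p.1)))),
    h * Real.sqrt ((2 - p.2) / (2 - p.1)))

def F0 : ℝ × ℝ → ℝ × ℝ := Fb (-1) (-1)
def F1 : ℝ × ℝ → ℝ × ℝ := Fb 1 (-1)
def F2 : ℝ × ℝ → ℝ × ℝ := Fb (-1) 1
def F3 : ℝ × ℝ → ℝ × ℝ := Fb 1 1

end TMH
namespace TMH

/-- `Λ(S) = ⋂_{n ≥ 0} f^{−n}(S)`: points whose whole forward orbit stays in `S` -/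
def LambdaS : Set (ℝ × ℝ) := {p | ∀ n : ℕ, tmap^[n] p ∈ S}

def Fsel (b : Bool) : ℝ × ℝ → ℝ × ℝ := if b then F1 else F0

/-- `Fcomp ω n = F_{ω 0} ∘ F_{ω 1} ∘ ⋯ ∘ F_{ω (n−1)}` -/
def Fcomp (ω : ℕ → Bool) : ℕ → (ℝ × ℝ → ℝ × ℝ)
  | 0 => id
  | n + 1 => Fcomp ω n ∘ Fsel (ω n)

/-- the fiber `Λ_ω = ⋂_{n ≥ 1} (F_{ω_1} ∘ ⋯ ∘ F_{ω_n})(S)` -/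
def Lambda (ω : ℕ → Bool) : Set (ℝ × ℝ) := ⋂ n : ℕ, Fcomp ω (n + 1) '' S

end TMH
namespace TMH

-- ====== auxiliary development ======

open Set Real

def Es (b : Bool) : ℝ := if b then 1 else -1

lemma Es_cases (b : Bool) : Es b = 1 ∨ Es b = -1 := by cases b <;> simp [Es]

lemma Es_sq (b : Bool) : Es b ^ 2 = 1 := by cases b <;> norm_num [Es]

lemma abs_Es (b : Bool) : |Es b| = 1 := by cases b <;> norm_num [Es]

lemma Fsel_eq (b : Bool) : Fsel b = Fb (Es b) (-1) := by
  cases b <;> simp [Fsel, Es, F0, F1]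

/-- the auxiliary quantity `u` -/
def uS (p : ℝ × ℝ) : ℝ := Real.sqrt ((2 - p.2) / (2 - p.1))

lemma S_facts {p : ℝ × ℝ} (hp : p ∈ S) :
    -1 ≤ p.1 ∧ p.1 ≤ 1 ∧ p.1 ^ 2 ≤ 1 ∧ p.2 ≤ -1 ∧ 1 ≤ 2 - p.1 ∧ 2 - p.1 ≤ 3 ∧ 3 ≤ 2 - p.2 := by
  obtain ⟨h1, h2⟩ := hp
  obtain ⟨ha, hb⟩ := abs_le.mp h1
  have hx2 : p.1 ^ 2 ≤ 1 := by nlinarith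
  exact ⟨ha, hb, hx2, by nlinarith, by linarith, by linarith, by nlinarith⟩

lemma u_sq {p : ℝ × ℝ} (hp : p ∈ S) : uS p ^ 2 = (2 - p.2) / (2 - p.1) := by
  obtain ⟨_, _, _, _, h5, _, h7⟩ := S_facts hp
  exact Real.sq_sqrt (by positivity)

lemma u_mul {p : ℝ × ℝ} (hp : p ∈ S) : uS p ^ 2 * (2 - p.1) = 2 - p.2 := by
  obtain ⟨_, _, _, _, h5, _, _⟩ := S_facts hp
  rw [u_sq hp, div_mul_cancel₀]
  linarith

lemma u_lb {p : ℝ × ℝ} (hp : p ∈ S) : 2 + p.1 ≤ uS p ^ 2 := by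
  obtain ⟨h1, h2, h3, h4, h5, h6, h7⟩ := S_facts hp
  rw [u_sq hp, le_div_iff₀ (by linarith)]
  nlinarith [hp.2]

lemma u_nonneg (p : ℝ × ℝ) : 0 ≤ uS p := Real.sqrt_nonneg _

lemma u_one {p : ℝ × ℝ} (hp : p ∈ S) : 1 ≤ uS p := by
  obtain ⟨h1, _, _, _, _, _, _⟩ := S_facts hp
  nlinarith [u_lb hp, u_nonneg p, sq_nonneg (uS p - 1)]

lemma Fb_snd (e : ℝ) (p : ℝ × ℝ) : (Fb e (-1) p).2 = -uS p := by
  simp [Fb, uS]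

lemma Fb_fst (e : ℝ) (p : ℝ × ℝ) :
    (Fb e (-1) p).1 = e * Real.sqrt ((2 - p.1) / (2 + uS p)) := by
  simp only [Fb, uS, neg_one_mul, sub_neg_eq_add]

lemma Fb_fst_sq {e : ℝ} (he : e = 1 ∨ e = -1) {p : ℝ × ℝ} (hp : p ∈ S) :
    (Fb e (-1) p).1 ^ 2 = (2 - p.1) / (2 + uS p) := by
  obtain ⟨_, _, _, _, h5, _, _⟩ := S_facts hp
  have h2u : (0:ℝ) < 2 + uS p := by nlinarith [u_one hp]
  have he2 : e ^ 2 = 1 := by rcases he with h | h <;> rw [h] <;> norm_num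
  rw [Fb_fst, mul_pow, he2, one_mul, Real.sq_sqrt (by positivity)]

lemma Fb_mem_S {e : ℝ} (he : e = 1 ∨ e = -1) {p : ℝ × ℝ} (hp : p ∈ S) :
    Fb e (-1) p ∈ S := by
  obtain ⟨h1, h2, h3, h4, h5, h6, h7⟩ := S_facts hp
  have hu1 := u_one hp
  have h2u : (0:ℝ) < 2 + uS p := by linarith
  constructor
  · have habs : |e| = 1 := by rcases he with h | h <;> rw [h] <;> norm_num
    rw [Fb_fst, abs_mul, habs, one_mul, abs_of_nonneg (Real.sqrt_nonneg _)]
    rw [show (1:ℝ) = Real.sqrt 1 by simp]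
    apply Real.sqrt_le_sqrt
    rw [div_le_one h2u]
    linarith
  · have key : (-uS p + 2) * (2 + uS p) ≤ 2 - p.1 := by nlinarith [u_lb hp]
    have : (-uS p + 2) ≤ (2 - p.1) / (2 + uS p) := by
      rw [le_div_iff₀ h2u]; exact key
    rw [Fb_fst_sq he hp, Fb_snd]
    linarith

lemma tmap_Fb {e : ℝ} (he : e = 1 ∨ e = -1) {p : ℝ × ℝ} (hp : p ∈ S) :
    tmap (Fb e (-1) p) = p := by
  obtain ⟨h1, h2, h3, h4, h5, h6, h7⟩ := S_facts hp
  have hu1 := u_one hp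
  have h2u : (0:ℝ) < 2 + uS p := by linarith
  have hum := u_mul hp
  have hq1 := Fb_fst_sq he hp
  have hq2 := Fb_snd e p
  have hdiv : (2 - p.1) / (2 + uS p) * (2 + uS p) = 2 - p.1 :=
    div_mul_cancel₀ _ (ne_of_gt h2u)
  unfold tmap
  apply Prod.ext
  · show (Fb e (-1) p).1 ^ 2 * ((Fb e (-1) p).2 - 2) + 2 = p.1
    rw [hq1, hq2]
    have : (2 - p.1) / (2 + uS p) * (-uS p - 2) = -(2 - p.1) := by
      have : (2 - p.1) / (2 + uS p) * (-uS p - 2)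
          = -((2 - p.1) / (2 + uS p) * (2 + uS p)) := by ring
      rw [this, hdiv]
    linarith [this]
  · show (Fb e (-1) p).1 ^ 2 * (Fb e (-1) p).2 ^ 2 * ((Fb e (-1) p).2 - 2) + 2 = p.2
    rw [hq1, hq2]
    have e1 : (2 - p.1) / (2 + uS p) * (-uS p) ^ 2 * (-uS p - 2)
        = -((2 - p.1) / (2 + uS p) * (2 + uS p)) * uS p ^ 2 := by ring
    rw [e1, hdiv]
    nlinarith [hum]


lemma Fb_sign {e : ℝ} (he : e = 1 ∨ e = -1) {p : ℝ × ℝ} (hp : p ∈ S) :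
    0 < e * (Fb e (-1) p).1 := by
  obtain ⟨h1, h2, h3, h4, h5, h6, h7⟩ := S_facts hp
  have hu1 := u_one hp
  have h2u : (0:ℝ) < 2 + uS p := by linarith
  have he2 : e ^ 2 = 1 := by rcases he with h | h <;> rw [h] <;> norm_num
  rw [Fb_fst, ← mul_assoc, ← sq, he2, one_mul]
  exact Real.sqrt_pos.mpr (by positivity)

lemma Fb_snd_le {e : ℝ} {p : ℝ × ℝ} (hp : p ∈ S) :
    (Fb e (-1) p).2 ≤ -Real.sqrt ((2 - p.2) / 3) := by
  obtain ⟨h1, h2, h3, h4, h5, h6, h7⟩ := S_facts hp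
  rw [Fb_snd, neg_le_neg_iff]
  apply Real.sqrt_le_sqrt
  apply div_le_div_of_nonneg_left (by linarith) (by linarith) h6

lemma Fb_snd_ge {e : ℝ} {p : ℝ × ℝ} (hp : p ∈ S) :
    -Real.sqrt (2 - p.2) ≤ (Fb e (-1) p).2 := by
  obtain ⟨h1, h2, h3, h4, h5, h6, h7⟩ := S_facts hp
  rw [Fb_snd, neg_le_neg_iff]
  apply Real.sqrt_le_sqrt
  exact div_le_self (by linarith) h5

lemma Fb_par_back {e : ℝ} (he : e = 1 ∨ e = -1) {p : ℝ × ℝ} (hp : p ∈ S)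
    (h : Fb e (-1) p ∈ Par) : p ∈ Par := by
  obtain ⟨h1, h2, h3, h4, h5, h6, h7⟩ := S_facts hp
  have hu1 := u_one hp
  have h2u : (0:ℝ) < 2 + uS p := by linarith
  have hum := u_mul hp
  have h' : -uS p = (2 - p.1) / (2 + uS p) - 2 := by
    have hh : (Fb e (-1) p).2 = (Fb e (-1) p).1 ^ 2 - 2 := h.out
    rwa [Fb_snd, Fb_fst_sq he hp] at hh
  have h'' : (-uS p + 2) * (2 + uS p) = 2 - p.1 := by
    have := congrArg (fun z => (z + 2) * (2 + uS p)) h'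
    rw [this, sub_add_cancel, div_mul_cancel₀ _ (ne_of_gt h2u)]
  have husq : uS p ^ 2 = 2 + p.1 := by nlinarith
  show p.2 = p.1 ^ 2 - 2
  nlinarith [hum, husq]


/-- parametrization of the parabola -/
def Pc (x : ℝ) : ℝ × ℝ := (x, x ^ 2 - 2)

/-- the 1D inverse branches on the parabola -/
def hb (b : Bool) (x : ℝ) : ℝ := Es b * Real.sqrt (2 - Real.sqrt (2 + x))

lemma Pc_mem_S {x : ℝ} (hx : x ∈ Icc (-1:ℝ) 1) : Pc x ∈ S := by
  obtain ⟨h1, h2⟩ := hx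
  exact ⟨abs_le.mpr ⟨h1, h2⟩, le_refl _⟩

lemma Pc_mem_Par (x : ℝ) : Pc x ∈ Par := rfl

lemma ParS_eq : Par ∩ S = Pc '' (Icc (-1:ℝ) 1) := by
  ext p
  constructor
  · rintro ⟨hpar, hS⟩
    refine ⟨p.1, abs_le.mp hS.1, ?_⟩
    have : p.2 = p.1 ^ 2 - 2 := hpar.out
    simp [Pc, ← this]
  · rintro ⟨x, hx, rfl⟩
    exact ⟨Pc_mem_Par x, Pc_mem_S hx⟩

lemma sqrt_two_add_le {x : ℝ} (hx : x ≤ 1) : Real.sqrt (2 + x) ≤ 7/4 := by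
  rw [show (7:ℝ)/4 = Real.sqrt ((7/4)^2) by rw [Real.sqrt_sq]; norm_num]
  apply Real.sqrt_le_sqrt; nlinarith

lemma one_le_sqrt_two_add {x : ℝ} (hx : -1 ≤ x) : 1 ≤ Real.sqrt (2 + x) := by
  rw [show (1:ℝ) = Real.sqrt 1 by simp]
  apply Real.sqrt_le_sqrt; linarith

lemma Fb_Pc {e : ℝ} (he : e = 1 ∨ e = -1) {x : ℝ} (hx : x ∈ Icc (-1:ℝ) 1) :
    Fb e (-1) (Pc x) = Pc (e * Real.sqrt (2 - Real.sqrt (2 + x))) := by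
  obtain ⟨h1, h2⟩ := hx
  have h2x : (0:ℝ) < 2 - x := by linarith
  have h2xp : (0:ℝ) ≤ 2 + x := by linarith
  have hu : uS (Pc x) = Real.sqrt (2 + x) := by
    unfold uS Pc
    simp only
    rw [show (2:ℝ) - (x ^ 2 - 2) = (2 - x) * (2 + x) by ring, mul_comm, mul_div_assoc,
      div_self (ne_of_gt h2x), mul_one]
  have hs7 := sqrt_two_add_le h2
  have hs1 := one_le_sqrt_two_add h1
  have hrat : (2 - x) / (2 + Real.sqrt (2 + x)) = 2 - Real.sqrt (2 + x) := by
    rw [div_eq_iff (by linarith)]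
    nlinarith [Real.sq_sqrt h2xp]
  have he2 : e ^ 2 = 1 := by rcases he with h | h <;> rw [h] <;> norm_num
  have hnn : (0:ℝ) ≤ 2 - Real.sqrt (2 + x) := by linarith
  apply Prod.ext
  · rw [Fb_fst, hu]
    simp only [Pc]
    rw [hrat]
  · rw [Fb_snd, hu]
    simp only [Pc]
    show -Real.sqrt (2 + x) = (e * Real.sqrt (2 - Real.sqrt (2 + x))) ^ 2 - 2
    rw [mul_pow, he2, one_mul, Real.sq_sqrt hnn]
    ring

lemma hb_mem {b : Bool} {x : ℝ} (hx : x ∈ Icc (-1:ℝ) 1) : hb b x ∈ Icc (-1:ℝ) 1 := by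
  obtain ⟨h1, h2⟩ := hx
  have hs7 := sqrt_two_add_le h2
  have hs1 := one_le_sqrt_two_add h1
  rw [mem_Icc, ← abs_le]
  unfold hb
  rw [abs_mul, abs_Es, one_mul, abs_of_nonneg (Real.sqrt_nonneg _)]
  rw [show (1:ℝ) = Real.sqrt 1 by simp]
  apply Real.sqrt_le_sqrt; linarith

/-- difference of square roots -/
lemma sqrt_diff_le {s t c : ℝ} (hs : 0 ≤ s) (ht : 0 ≤ t) (hc : 0 < c)
    (h : c ≤ Real.sqrt s + Real.sqrt t) : |Real.sqrt s - Real.sqrt t| ≤ |s - t| / c := by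
  rw [le_div_iff₀ hc]
  have key : (Real.sqrt s - Real.sqrt t) * (Real.sqrt s + Real.sqrt t) = s - t := by
    nlinarith [Real.sq_sqrt hs, Real.sq_sqrt ht]
  calc |Real.sqrt s - Real.sqrt t| * c
      ≤ |Real.sqrt s - Real.sqrt t| * (Real.sqrt s + Real.sqrt t) :=
        mul_le_mul_of_nonneg_left h (abs_nonneg _)
    _ = |(Real.sqrt s - Real.sqrt t) * (Real.sqrt s + Real.sqrt t)| := by
        rw [abs_mul, abs_of_nonneg (le_trans hc.le h)]
    _ = |s - t| := by rw [key]

lemma hb_lip {b : Bool} {x y : ℝ} (hx : x ∈ Icc (-1:ℝ) 1) (hy : y ∈ Icc (-1:ℝ) 1) :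
    |hb b x - hb b y| ≤ |x - y| / 2 := by
  obtain ⟨hx1, hx2⟩ := hx
  obtain ⟨hy1, hy2⟩ := hy
  set u := Real.sqrt (2 + x) with hu
  set v := Real.sqrt (2 + y) with hv
  have hu7 := sqrt_two_add_le hx2
  have hu1 := one_le_sqrt_two_add hx1
  have hv7 := sqrt_two_add_le hy2
  have hv1 := one_le_sqrt_two_add hy1
  have step1 : |u - v| ≤ |(2+x) - (2+y)| / 2 :=
    sqrt_diff_le (by linarith) (by linarith) (by norm_num) (by rw [← hu, ← hv]; linarith)
  have half1 : (1:ℝ)/2 ≤ Real.sqrt (2 - u) := by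
    rw [show (1:ℝ)/2 = Real.sqrt ((1/2)^2) by rw [Real.sqrt_sq]; norm_num]
    apply Real.sqrt_le_sqrt; norm_num; linarith
  have half2 : (1:ℝ)/2 ≤ Real.sqrt (2 - v) := by
    rw [show (1:ℝ)/2 = Real.sqrt ((1/2)^2) by rw [Real.sqrt_sq]; norm_num]
    apply Real.sqrt_le_sqrt; norm_num; linarith
  have step2 : |Real.sqrt (2 - u) - Real.sqrt (2 - v)| ≤ |(2 - u) - (2 - v)| / 1 :=
    sqrt_diff_le (by linarith) (by linarith) (by norm_num) (by linarith)
  have e1 : |hb b x - hb b y| = |Real.sqrt (2 - u) - Real.sqrt (2 - v)| := by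
    unfold hb
    rw [← hu, ← hv, ← mul_sub, abs_mul, abs_Es, one_mul]
  rw [e1]
  have : |(2 - u) - (2 - v)| = |u - v| := by rw [show (2 - u) - (2 - v) = -(u - v) by ring, abs_neg]
  rw [this, div_one] at step2
  have : |(2+x) - (2+y)| = |x - y| := by rw [show (2+x) - (2+y) = x - y by ring]
  rw [this] at step1
  linarith


lemma Fsel_mem_S {b : Bool} {p : ℝ × ℝ} (hp : p ∈ S) : Fsel b p ∈ S := by
  rw [Fsel_eq]; exact Fb_mem_S (Es_cases b) hp

lemma Fcomp_mem_S (ω : ℕ → Bool) : ∀ n, ∀ p ∈ S, Fcomp ω n p ∈ S := by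
  intro n
  induction n with
  | zero => intro p hp; exact hp
  | succ n ih =>
    intro p hp
    exact ih _ (Fsel_mem_S hp)

lemma Fb_contOn (e : ℝ) : ContinuousOn (Fb e (-1)) S := by
  have hden : ∀ p ∈ S, 2 - p.1 ≠ 0 := by
    intro p hp
    obtain ⟨_, _, _, _, h5, _, _⟩ := S_facts hp
    intro h; rw [h] at h5; linarith
  have c1 : ContinuousOn (fun p : ℝ × ℝ => (2 - p.2) / (2 - p.1)) S :=
    ContinuousOn.div (by fun_prop) (by fun_prop) hden
  have c2 : ContinuousOn (fun p : ℝ × ℝ => Real.sqrt ((2 - p.2) / (2 - p.1))) S :=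
    Real.continuous_sqrt.comp_continuousOn c1
  unfold Fb
  apply ContinuousOn.prodMk
  · apply ContinuousOn.mul continuousOn_const
    apply Real.continuous_sqrt.comp_continuousOn
    apply ContinuousOn.div (by fun_prop)
    · exact continuousOn_const.sub (continuousOn_const.mul c2)
    · intro p hp
      have h1 := u_one hp
      have : 2 - (-1) * Real.sqrt ((2 - p.2) / (2 - p.1)) = 2 + uS p := by
        unfold uS; ring
      rw [this]
      intro h; linarith [u_nonneg p]
  · exact continuousOn_const.mul c2

lemma Fsel_contOn (b : Bool) : ContinuousOn (Fsel b) S := by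
  rw [Fsel_eq]; exact Fb_contOn _

lemma Fcomp_contOn (ω : ℕ → Bool) : ∀ n, ContinuousOn (Fcomp ω n) S := by
  intro n
  induction n with
  | zero => exact continuousOn_id
  | succ n ih =>
    exact ContinuousOn.comp ih (Fsel_contOn (ω n)) (fun p hp => Fsel_mem_S hp)

lemma Fsel_par_back {b : Bool} {p : ℝ × ℝ} (hp : p ∈ S) (h : Fsel b p ∈ Par) : p ∈ Par := by
  rw [Fsel_eq] at h; exact Fb_par_back (Es_cases b) hp h

lemma Fcomp_par_back (ω : ℕ → Bool) : ∀ n, ∀ p ∈ S, Fcomp ω n p ∈ Par → p ∈ Par := by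
  intro n
  induction n with
  | zero => intro p _ h; exact h
  | succ n ih =>
    intro p hp h
    exact Fsel_par_back hp (ih _ (Fsel_mem_S hp) h)

lemma Fsel_Pc {b : Bool} {x : ℝ} (hx : x ∈ Icc (-1:ℝ) 1) : Fsel b (Pc x) = Pc (hb b x) := by
  rw [Fsel_eq]; exact Fb_Pc (Es_cases b) hx

def hcomp (ω : ℕ → Bool) : ℕ → ℝ → ℝ
  | 0 => id
  | n + 1 => hcomp ω n ∘ hb (ω n)

lemma hcomp_mem (ω : ℕ → Bool) : ∀ n, ∀ x ∈ Icc (-1:ℝ) 1, hcomp ω n x ∈ Icc (-1:ℝ) 1 := by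
  intro n
  induction n with
  | zero => intro x hx; exact hx
  | succ n ih => intro x hx; exact ih _ (hb_mem hx)

lemma Fcomp_Pc (ω : ℕ → Bool) : ∀ n, ∀ x ∈ Icc (-1:ℝ) 1,
    Fcomp ω n (Pc x) = Pc (hcomp ω n x) := by
  intro n
  induction n with
  | zero => intro x hx; rfl
  | succ n ih =>
    intro x hx
    show Fcomp ω n (Fsel (ω n) (Pc x)) = Pc (hcomp ω n (hb (ω n) x))
    rw [Fsel_Pc hx]
    exact ih _ (hb_mem hx)

lemma hcomp_lip (ω : ℕ → Bool) : ∀ n, ∀ x ∈ Icc (-1:ℝ) 1, ∀ y ∈ Icc (-1:ℝ) 1,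
    |hcomp ω n x - hcomp ω n y| ≤ (1/2)^n * |x - y| := by
  intro n
  induction n with
  | zero => intro x _ y _; simp [hcomp]
  | succ n ih =>
    intro x hx y hy
    have h1 := ih _ (hb_mem (b := ω n) hx) _ (hb_mem (b := ω n) hy)
    have h2 := hb_lip (b := ω n) hx hy
    calc |hcomp ω n (hb (ω n) x) - hcomp ω n (hb (ω n) y)|
        ≤ (1/2)^n * |hb (ω n) x - hb (ω n) y| := h1
      _ ≤ (1/2)^n * (|x - y| / 2) := by
          apply mul_le_mul_of_nonneg_left h2 (by positivity)
      _ = (1/2)^(n+1) * |x - y| := by ring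


lemma continuous_Pc : Continuous Pc := by unfold Pc; fun_prop

lemma parS_compact : IsCompact (Par ∩ S) := by
  rw [ParS_eq]; exact isCompact_Icc.image continuous_Pc

lemma Fsel_parS {b : Bool} : Set.MapsTo (Fsel b) (Par ∩ S) (Par ∩ S) := by
  intro r hr
  rw [ParS_eq] at hr ⊢
  obtain ⟨x, hx, rfl⟩ := hr
  rw [Fsel_Pc hx]
  exact ⟨hb b x, hb_mem hx, rfl⟩

lemma Fcomp_parS (ω : ℕ → Bool) : ∀ n, Set.MapsTo (Fcomp ω n) (Par ∩ S) (Par ∩ S) := by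
  intro n
  induction n with
  | zero => exact Set.mapsTo_id _
  | succ n ih => exact ih.comp Fsel_parS

lemma Fcomp_succ_eq (ω : ℕ → Bool) (n : ℕ) :
    Fcomp ω (n + 1) = Fcomp ω n ∘ Fsel (ω n) := rfl

lemma lambda_inter_par (ω : ℕ → Bool) :
    Lambda ω ∩ Par = ⋂ n : ℕ, Fcomp ω (n + 1) '' (Par ∩ S) := by
  ext p
  constructor
  · rintro ⟨hl, hpar⟩
    rw [Set.mem_iInter]
    intro n
    obtain ⟨r, hr, hrp⟩ := Set.mem_iInter.mp hl n
    have hrpar : r ∈ Par := Fcomp_par_back ω (n + 1) r hr (by rw [hrp]; exact hpar)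
    exact ⟨r, ⟨hrpar, hr⟩, hrp⟩
  · intro h
    rw [Set.mem_iInter] at h
    constructor
    · rw [Lambda, Set.mem_iInter]
      intro n
      exact Set.image_mono Set.inter_subset_right (h n)
    · obtain ⟨r, hr, hrp⟩ := h 0
      rw [← hrp]
      exact (Fcomp_parS ω 1 hr).1

lemma lambda_par_antitone (ω : ℕ → Bool) (n : ℕ) :
    Fcomp ω (n + 2) '' (Par ∩ S) ⊆ Fcomp ω (n + 1) '' (Par ∩ S) := by
  rw [Fcomp_succ_eq ω (n + 1), Set.image_comp]
  exact Set.image_mono (Set.mapsTo_iff_image_subset.mp Fsel_parS)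

lemma lambda_par_compact (ω : ℕ → Bool) (n : ℕ) :
    IsCompact (Fcomp ω (n + 1) '' (Par ∩ S)) :=
  parS_compact.image_of_continuousOn ((Fcomp_contOn ω (n + 1)).mono Set.inter_subset_right)

lemma lambda_par_nonempty (ω : ℕ → Bool) : (Lambda ω ∩ Par).Nonempty := by
  rw [lambda_inter_par]
  apply IsCompact.nonempty_iInter_of_sequence_nonempty_isCompact_isClosed
  · exact lambda_par_antitone ω
  · intro n
    apply Set.Nonempty.image
    exact ⟨Pc (-1), Pc_mem_Par (-1), Pc_mem_S (by norm_num)⟩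
  · exact lambda_par_compact ω 0
  · intro n
    exact (lambda_par_compact ω n).isClosed

lemma lambda_par_subsingleton (ω : ℕ → Bool) : (Lambda ω ∩ Par).Subsingleton := by
  intro p hp q hq
  have key : ∀ n : ℕ, |p.1 - q.1| ≤ (1/2:ℝ)^(n+1) * 2 := by
    intro n
    have hp' := Set.mem_iInter.mp ((lambda_inter_par ω) ▸ hp) n
    have hq' := Set.mem_iInter.mp ((lambda_inter_par ω) ▸ hq) n
    obtain ⟨r, hr, hrp⟩ := hp'
    obtain ⟨r', hr', hrq⟩ := hq'
    rw [ParS_eq] at hr hr'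
    obtain ⟨a, ha, rfl⟩ := hr
    obtain ⟨b, hb', rfl⟩ := hr'
    rw [Fcomp_Pc ω (n+1) a ha] at hrp
    rw [Fcomp_Pc ω (n+1) b hb'] at hrq
    have e1 : p.1 = hcomp ω (n+1) a := by rw [← hrp]; rfl
    have e2 : q.1 = hcomp ω (n+1) b := by rw [← hrq]; rfl
    rw [e1, e2]
    have hab : |a - b| ≤ 2 := by
      obtain ⟨ha1, ha2⟩ := ha; obtain ⟨hb1, hb2⟩ := hb'
      rw [abs_le]; constructor <;> linarith
    calc |hcomp ω (n+1) a - hcomp ω (n+1) b| ≤ (1/2:ℝ)^(n+1) * |a - b| :=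
          hcomp_lip ω (n+1) a ha b hb'
      _ ≤ (1/2:ℝ)^(n+1) * 2 := by
          apply mul_le_mul_of_nonneg_left hab (by positivity)
  have h0 : Tendsto (fun n : ℕ => (1/2:ℝ)^(n+1) * 2) atTop (nhds 0) := by
    have h1 : Tendsto (fun n : ℕ => (1/2:ℝ)^n) atTop (nhds 0) :=
      tendsto_pow_atTop_nhds_zero_of_lt_one (by norm_num) (by norm_num)
    have h2 := (h1.comp (tendsto_add_atTop_nat 1)).mul_const 2
    simpa using h2
  have habs : |p.1 - q.1| ≤ 0 := ge_of_tendsto' h0 key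
  have h1 : p.1 = q.1 := by
    have := abs_nonneg (p.1 - q.1)
    have : |p.1 - q.1| = 0 := le_antisymm habs this
    have := abs_eq_zero.mp this
    linarith
  apply Prod.ext h1
  have e1 : p.2 = p.1 ^ 2 - 2 := hp.2.out
  have e2 : q.2 = q.1 ^ 2 - 2 := hq.2.out
  rw [e1, e2, h1]


/-- nested intersections of compact connected sets are connected -/
lemma isPreconnected_iInter_nested {X : Type*} [TopologicalSpace X] [T2Space X]
    (K : ℕ → Set X) (hcpt : ∀ n, IsCompact (K n)) (hconn : ∀ n, IsPreconnected (K n))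
    (hanti : ∀ n, K (n + 1) ⊆ K n) : IsPreconnected (⋂ n, K n) := by
  set Z := ⋂ n, K n with hZ
  have hZclosed : IsClosed Z := isClosed_iInter (fun n => (hcpt n).isClosed)
  have hZsub : ∀ n, Z ⊆ K n := fun n => Set.iInter_subset K n
  intro u v hu hv hsuv hZu hZv
  by_contra hne
  rw [Set.not_nonempty_iff_eq_empty] at hne
  set A := Z \ v with hA
  set B := Z \ u with hB
  have hAc : IsCompact A :=
    (hcpt 0).of_isClosed_subset (hZclosed.inter (isClosed_compl_iff.mpr hv))
      ((Set.diff_subset).trans (hZsub 0))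
  have hBc : IsCompact B :=
    (hcpt 0).of_isClosed_subset (hZclosed.inter (isClosed_compl_iff.mpr hu))
      ((Set.diff_subset).trans (hZsub 0))
  have hdisj : Disjoint A B := by
    rw [Set.disjoint_left]
    rintro x ⟨hxZ, hxv⟩ ⟨-, hxu⟩
    rcases hsuv hxZ with h | h
    · exact hxu h
    · exact hxv h
  obtain ⟨U, V, hU, hV, hAU, hBV, hUV⟩ := SeparatedNhds.of_isCompact_isCompact hAc hBc hdisj
  have hZUV : Z ⊆ U ∪ V := by
    intro z hz
    rcases hsuv hz with h | h
    · have hznv : z ∉ v := by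
        intro hzv
        have : z ∈ Z ∩ (u ∩ v) := ⟨hz, h, hzv⟩
        rw [hne] at this; exact this
      exact Or.inl (hAU ⟨hz, hznv⟩)
    · have hznu : z ∉ u := by
        intro hzu
        have : z ∈ Z ∩ (u ∩ v) := ⟨hz, hzu, h⟩
        rw [hne] at this; exact this
      exact Or.inr (hBV ⟨hz, hznu⟩)
  by_cases hall : ∀ n, (K n \ (U ∪ V)).Nonempty
  · have : (⋂ n, K n \ (U ∪ V)).Nonempty := by
      apply IsCompact.nonempty_iInter_of_sequence_nonempty_isCompact_isClosed
      · intro n; exact Set.diff_subset_diff_left (hanti n)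
      · exact hall
      · exact (hcpt 0).of_isClosed_subset
          ((hcpt 0).isClosed.inter (isClosed_compl_iff.mpr (hU.union hV))) Set.diff_subset
      · intro n
        exact (hcpt n).isClosed.inter (isClosed_compl_iff.mpr (hU.union hV))
    obtain ⟨x, hx⟩ := this
    rw [Set.mem_iInter] at hx
    have hxZ : x ∈ Z := Set.mem_iInter.mpr (fun n => ((hx n).1))
    exact (hx 0).2 (hZUV hxZ)
  · push_neg at hall
    obtain ⟨n, hn⟩ := hall
    rw [Set.diff_eq_empty] at hn
    obtain ⟨a, haZ, hau⟩ := hZu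
    obtain ⟨b, hbZ, hbv⟩ := hZv
    have haA : a ∈ A := by
      refine ⟨haZ, fun hav => ?_⟩
      have : a ∈ Z ∩ (u ∩ v) := ⟨haZ, hau, hav⟩
      rw [hne] at this; exact this
    have hbB : b ∈ B := by
      refine ⟨hbZ, fun hbu => ?_⟩
      have : b ∈ Z ∩ (u ∩ v) := ⟨hbZ, hbu, hbv⟩
      rw [hne] at this; exact this
    have := hconn n U V hU hV hn ⟨a, hZsub n haZ, hAU haA⟩ ⟨b, hZsub n hbZ, hBV hbB⟩
    obtain ⟨x, -, hxU, hxV⟩ := this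
    exact (Set.disjoint_left.mp hUV hxU) hxV

lemma tmap_Fsel {b : Bool} {p : ℝ × ℝ} (hp : p ∈ S) : tmap (Fsel b p) = p := by
  rw [Fsel_eq]; exact tmap_Fb (Es_cases b) hp

lemma Fcomp_shift (ω : ℕ → Bool) : ∀ n,
    Fcomp ω (n + 1) = Fsel (ω 0) ∘ Fcomp (fun k => ω (k + 1)) n := by
  intro n
  induction n with
  | zero => rfl
  | succ n ih =>
    show Fcomp ω (n + 1) ∘ Fsel (ω (n + 1)) = _
    rw [ih]
    rfl

lemma mem_lambda_shift {ω : ℕ → Bool} {p : ℝ × ℝ} (hp : p ∈ Lambda ω) :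
    tmap p ∈ Lambda (fun k => ω (k + 1)) := by
  rw [Lambda, Set.mem_iInter]
  intro m
  have h := Set.mem_iInter.mp hp (m + 1)
  rw [Fcomp_shift ω (m + 1)] at h
  obtain ⟨s, hs, hsp⟩ := h
  have hr : Fcomp (fun k => ω (k + 1)) (m + 1) s ∈ S := Fcomp_mem_S _ _ _ hs
  refine ⟨s, hs, ?_⟩
  rw [← hsp]
  exact (tmap_Fsel hr).symm

lemma lambda_sign {ω : ℕ → Bool} {p : ℝ × ℝ} (hp : p ∈ Lambda ω) :
    0 < Es (ω 0) * p.1 := by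
  have h := Set.mem_iInter.mp hp 0
  obtain ⟨r, hr, hrp⟩ := h
  have e : Fcomp ω 1 r = Fsel (ω 0) r := rfl
  rw [e, Fsel_eq] at hrp
  rw [← hrp]
  exact Fb_sign (Es_cases (ω 0)) hr

lemma lambda_itinerary : ∀ n : ℕ, ∀ ω ω' : ℕ → Bool, ∀ p : ℝ × ℝ,
    p ∈ Lambda ω → p ∈ Lambda ω' → ω n = ω' n := by
  intro n
  induction n with
  | zero =>
    intro ω ω' p h h'
    have s1 := lambda_sign h
    have s2 := lambda_sign h'
    cases h1 : ω 0 <;> cases h2 : ω' 0 <;>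
      rw [h1] at s1 <;> rw [h2] at s2 <;> simp [Es] at s1 s2 <;>
      first | rfl | linarith
  | succ n ih =>
    intro ω ω' p h h'
    exact ih _ _ _ (mem_lambda_shift h) (mem_lambda_shift h')

lemma lambda_disjoint (ω ω' : ℕ → Bool) (hne : ω ≠ ω') : Lambda ω ∩ Lambda ω' = ∅ := by
  rw [Set.eq_empty_iff_forall_notMem]
  rintro p ⟨h, h'⟩
  exact hne (funext fun n => lambda_itinerary n ω ω' p h h')


def Dd (t : ℝ) : ℕ → ℝ
  | 0 => max 2 (-t)
  | n + 1 => 3 * (Dd t n) ^ 2 - 2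

lemma Dd_succ (t : ℝ) (n : ℕ) : Dd t (n + 1) = 3 * (Dd t n) ^ 2 - 2 := rfl

lemma Dd_ge_two (t : ℝ) : ∀ n, 2 ≤ Dd t n := by
  intro n
  induction n with
  | zero => exact le_max_left _ _
  | succ n ih => rw [Dd_succ]; nlinarith

def Mm (t : ℝ) (n : ℕ) : ℝ := 9 * Dd t (n + 1)

lemma Mm_ge (t : ℝ) (n : ℕ) : 18 ≤ Mm t n := by
  have := Dd_ge_two t (n + 1); unfold Mm; linarith

def SMs (m : ℝ) : Set (ℝ × ℝ) := S ∩ {q | -m ≤ q.2}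

lemma SMs_sub_S {m : ℝ} : SMs m ⊆ S := Set.inter_subset_left

lemma S_closed : IsClosed S := by
  have : S = {p : ℝ × ℝ | |p.1| ≤ 1} ∩ {p : ℝ × ℝ | p.2 - (p.1 ^ 2 - 2) ≤ 0} := by
    ext p
    simp only [S, Set.mem_setOf_eq, Set.mem_inter_iff]
    constructor
    · rintro ⟨h1, h2⟩; exact ⟨h1, by linarith⟩
    · rintro ⟨h1, h2⟩; exact ⟨h1, by linarith⟩
  rw [this]
  exact (isClosed_le (by fun_prop) continuous_const).inter
    (isClosed_le (by fun_prop) continuous_const)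

lemma SMs_closed (m : ℝ) : IsClosed (SMs m) :=
  S_closed.inter (isClosed_le continuous_const continuous_snd)

lemma SMs_compact (m : ℝ) : IsCompact (SMs m) := by
  apply IsCompact.of_isClosed_subset (isCompact_Icc (a := ((-1:ℝ), -m)) (b := ((1:ℝ), (0:ℝ))))
    (SMs_closed m)
  rintro p ⟨hpS, hpm⟩
  obtain ⟨h1, h2, h3, h4, _, _, _⟩ := S_facts hpS
  simp only [Set.mem_Icc, Prod.le_def]
  exact ⟨⟨h1, hpm⟩, ⟨h2, by linarith⟩⟩

lemma SMs_conn {m : ℝ} (hm : 3 ≤ m) : IsPreconnected (SMs m) := by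
  have himg : SMs m =
      (fun q : ℝ × ℝ => (q.1, q.2 * (q.1 ^ 2 - 2) + (1 - q.2) * (-m))) ''
        (Set.Icc (-1:ℝ) 1 ×ˢ Set.Icc (0:ℝ) 1) := by
    ext p
    constructor
    · rintro ⟨⟨hx, hy⟩, hpm⟩
      obtain ⟨hx1, hx2⟩ := abs_le.mp hx
      have hd : (0:ℝ) < p.1 ^ 2 - 2 + m := by nlinarith
      refine ⟨(p.1, (p.2 + m) / (p.1 ^ 2 - 2 + m)), ⟨⟨hx1, hx2⟩, ?_, ?_⟩, ?_⟩
      · apply div_nonneg _ hd.le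
        have : -m ≤ p.2 := hpm
        linarith
      · rw [div_le_one hd]
        have : p.2 ≤ p.1 ^ 2 - 2 := hy
        linarith
      · have e : (p.2 + m) / (p.1 ^ 2 - 2 + m) * (p.1 ^ 2 - 2 + m) = p.2 + m :=
          div_mul_cancel₀ _ (ne_of_gt hd)
        have goal2 : (p.2 + m) / (p.1 ^ 2 - 2 + m) * (p.1 ^ 2 - 2) +
            (1 - (p.2 + m) / (p.1 ^ 2 - 2 + m)) * (-m) = p.2 := by nlinarith [e]
        show (p.1, (p.2 + m) / (p.1 ^ 2 - 2 + m) * (p.1 ^ 2 - 2) +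
            (1 - (p.2 + m) / (p.1 ^ 2 - 2 + m)) * (-m)) = p
        rw [goal2]
    · rintro ⟨⟨x, s⟩, ⟨⟨hx1, hx2⟩, ⟨hs1, hs2⟩⟩, rfl⟩
      refine ⟨⟨abs_le.mpr ⟨hx1, hx2⟩, ?_⟩, ?_⟩
      · show s * (x ^ 2 - 2) + (1 - s) * (-m) ≤ x ^ 2 - 2
        nlinarith
      · show -m ≤ s * (x ^ 2 - 2) + (1 - s) * (-m)
        nlinarith
  rw [himg]
  exact (isPreconnected_Icc.prod isPreconnected_Icc).image _ (Continuous.continuousOn (by fun_prop))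

lemma Fsel_depth {b : Bool} {p : ℝ × ℝ} (hp : p ∈ S) {R : ℝ} (hR : 0 ≤ R)
    (h : p.2 ≤ 2 - 3 * R ^ 2) : (Fsel b p).2 ≤ -R := by
  have h1 : (Fsel b p).2 ≤ -Real.sqrt ((2 - p.2) / 3) := by
    rw [Fsel_eq]; exact Fb_snd_le hp
  have h7 := (S_facts hp).2.2.2.2.2.2
  have h2 : R ≤ Real.sqrt ((2 - p.2) / 3) := by
    rw [Real.le_sqrt hR (by linarith)]
    rw [le_div_iff₀ (by norm_num : (0:ℝ) < 3)]
    linarith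
  linarith

lemma Fcomp_depth (t : ℝ) (ω : ℕ → Bool) : ∀ k, ∀ p ∈ S, p.2 ≤ -(Dd t k) →
    (Fcomp ω k p).2 ≤ -(Dd t 0) := by
  intro k
  induction k with
  | zero => intro p _ h; exact h
  | succ k ih =>
    intro p hp h
    have hd := Dd_ge_two t k
    have hF : (Fsel (ω k) p).2 ≤ -(Dd t k) := by
      apply Fsel_depth hp (by linarith)
      rw [Dd_succ] at h
      linarith
    exact ih _ (Fsel_mem_S hp) hF

lemma Fsel_SM {b : Bool} {n : ℕ} {t : ℝ} :
    Set.MapsTo (Fsel b) (SMs (Mm t (n + 1))) (SMs (Mm t n)) := by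
  rintro q ⟨hqS, hqm⟩
  refine ⟨Fsel_mem_S hqS, ?_⟩
  have h1 : -Real.sqrt (2 - q.2) ≤ (Fsel b q).2 := by
    rw [Fsel_eq]; exact Fb_snd_ge hqS
  have hMn := Mm_ge t n
  have hMn1 := Mm_ge t (n + 1)
  have h2 : Real.sqrt (2 - q.2) ≤ Mm t n := by
    rw [show Mm t n = Real.sqrt ((Mm t n) ^ 2) from (Real.sqrt_sq (by linarith)).symm]
    apply Real.sqrt_le_sqrt
    have hqm' : -(Mm t (n + 1)) ≤ q.2 := hqm
    have hkey : 2 + Mm t (n + 1) ≤ (Mm t n) ^ 2 := by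
      have hD := Dd_ge_two t (n + 1)
      have e1 : Mm t (n + 1) = 9 * (3 * (Dd t (n + 1)) ^ 2 - 2) := by
        unfold Mm; rw [Dd_succ]
      have e2 : Mm t n = 9 * Dd t (n + 1) := rfl
      rw [e1, e2]
      nlinarith
    linarith
  show -(Mm t n) ≤ (Fsel b q).2
  linarith

lemma lambda_unbounded_aux (ω : ℕ → Bool) (p : ℝ × ℝ) (hp : p ∈ Lambda ω ∩ Par)
    (t : ℝ) (ht : t ≤ -2) :
    ∃ z ∈ connectedComponentIn (Lambda ω) p, z.2 ≤ t := by
  set K : ℕ → Set (ℝ × ℝ) := fun n => Fcomp ω (n + 1) '' SMs (Mm t n) with hK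
  have hM3 : ∀ n, (3:ℝ) ≤ Mm t n := fun n => by linarith [Mm_ge t n]
  have hcpt : ∀ n, IsCompact (K n) := fun n =>
    (SMs_compact _).image_of_continuousOn ((Fcomp_contOn ω (n + 1)).mono SMs_sub_S)
  have hconn : ∀ n, IsPreconnected (K n) := fun n =>
    (SMs_conn (hM3 n)).image _ ((Fcomp_contOn ω (n + 1)).mono SMs_sub_S)
  have hanti : ∀ n, K (n + 1) ⊆ K n := by
    intro n
    show Fcomp ω (n + 2) '' SMs (Mm t (n + 1)) ⊆ Fcomp ω (n + 1) '' SMs (Mm t n)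
    rw [Fcomp_succ_eq ω (n + 1), Set.image_comp]
    exact Set.image_mono (Set.mapsTo_iff_image_subset.mp Fsel_SM)
  have hPmem : ∀ n, p ∈ K n := by
    intro n
    have h1 := Set.mem_iInter.mp ((lambda_inter_par ω) ▸ hp) n
    apply Set.image_mono _ h1
    rintro r ⟨hrpar, hrS⟩
    refine ⟨hrS, ?_⟩
    have : r.2 = r.1 ^ 2 - 2 := hrpar.out
    have h9 := hM3 n
    have := (S_facts hrS).2.2.1
    show -(Mm t n) ≤ r.2
    nlinarith [sq_nonneg r.1]
  have hdeep : ∀ n, ∃ z ∈ K n, z.2 ≤ t := by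
    intro n
    have hD := Dd_ge_two t (n + 1)
    have hqS : ((0:ℝ), -(Dd t (n + 1))) ∈ S := by
      constructor
      · show |(0:ℝ)| ≤ 1; simp
      · show -(Dd t (n + 1)) ≤ (0:ℝ) ^ 2 - 2; nlinarith
    have hqM : ((0:ℝ), -(Dd t (n + 1))) ∈ SMs (Mm t n) := by
      refine ⟨hqS, ?_⟩
      show -(Mm t n) ≤ -(Dd t (n + 1))
      unfold Mm; nlinarith
    refine ⟨Fcomp ω (n + 1) ((0:ℝ), -(Dd t (n + 1))), ⟨_, hqM, rfl⟩, ?_⟩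
    have := Fcomp_depth t ω (n + 1) _ hqS (le_refl _)
    have hD0 : -(Dd t 0) ≤ t := by
      have : -t ≤ Dd t 0 := le_max_right _ _
      linarith
    linarith
  have hZconn := isPreconnected_iInter_nested K hcpt hconn hanti
  have hZsubL : (⋂ n, K n) ⊆ Lambda ω := by
    intro z hz
    rw [Lambda, Set.mem_iInter]
    intro n
    exact Set.image_mono SMs_sub_S (Set.mem_iInter.mp hz n)
  have hZcomp : (⋂ n, K n) ⊆ connectedComponentIn (Lambda ω) p :=
    hZconn.subset_connectedComponentIn (Set.mem_iInter.mpr hPmem) hZsubL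
  have hdeepZ : (⋂ n, K n ∩ {q : ℝ × ℝ | q.2 ≤ t}).Nonempty := by
    apply IsCompact.nonempty_iInter_of_sequence_nonempty_isCompact_isClosed
    · intro n; exact Set.inter_subset_inter_left _ (hanti n)
    · intro n
      obtain ⟨z, hz, hzt⟩ := hdeep n
      exact ⟨z, hz, hzt⟩
    · exact ((hcpt 0).inter_right (isClosed_le continuous_snd continuous_const)).of_isClosed_subset
        (((hcpt 0).inter_right (isClosed_le continuous_snd continuous_const)).isClosed)
        (le_refl _)
    · intro n
      exact ((hcpt n).inter_right (isClosed_le continuous_snd continuous_const)).isClosed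
  obtain ⟨z, hz⟩ := hdeepZ
  rw [Set.mem_iInter] at hz
  refine ⟨z, hZcomp (Set.mem_iInter.mpr (fun n => (hz n).1)), (hz 0).2⟩



end TMH
namespace TMH

/-- **Lemma (structure of the fibers `Λ_ω`).**
For every `ω ∈ {0,1}^ℕ` the set `p_ω = Λ_ω ∩ 𝒫` is nonempty and connected, the
connected component of `Λ_ω` containing `p_ω` is unbounded, and distinct fibers are
disjoint. -/
theorem fiber_structure :
    (∀ ω : ℕ → Bool,
      (Lambda ω ∩ Par).Nonempty ∧ IsConnected (Lambda ω ∩ Par) ∧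
      ∀ p ∈ Lambda ω ∩ Par,
        ¬ Bornology.IsBounded (connectedComponentIn (Lambda ω) p)) ∧
    (∀ ω ω' : ℕ → Bool, ω ≠ ω' → Lambda ω ∩ Lambda ω' = ∅) := by
  constructor
  · intro ω
    obtain ⟨pω, hpω⟩ := lambda_par_nonempty ω
    refine ⟨⟨pω, hpω⟩, ?_, ?_⟩
    · rw [(lambda_par_subsingleton ω).eq_singleton_of_mem hpω]
      exact isConnected_singleton
    · intro p hp hbdd
      obtain ⟨r, hr⟩ := (Metric.isBounded_iff_subset_closedBall 0).mp hbdd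
      obtain ⟨z, hz, hzt⟩ := lambda_unbounded_aux ω p hp (-(|r| + 3))
        (by have := abs_nonneg r; linarith)
      have h1 : ‖z‖ ≤ r := by
        have := hr hz
        rwa [Metric.mem_closedBall, dist_zero_right] at this
      have h2 : ‖z.2‖ ≤ ‖z‖ := norm_snd_le z
      have h3 : -(z.2) ≤ ‖z.2‖ := by
        rw [Real.norm_eq_abs]; exact neg_le_abs z.2
      have h4 : r ≤ |r| := le_abs_self r
      linarith
  · exact lambda_disjoint


end TMH
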